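/- For k-element subsets of [n], the aging function on label-triples is injective on white triples: if (I,J,K) and (I',J',K') are white label-triples (unordered) with I∪J = I'∪J', J∪K = J'∪K', K∪I = K'∪I' (as an unordered triple of sets), then {I,J,K} = {I',J',K'}. Moreover, applying the inverse aging function to the image of a white triple recovers the original triple: (I∪J)∩(J∪K) = J, (J∪K)∩(K∪I) = K, and (K∪I)∩(I∪J) = I. -/
import Mathlib

section aux

variable {n : ℕ}

/-- Any pairwise intersection equals the triple intersection. -/
lemma white_core_eq (k : ℕ) (I J K : Finset (Fin n))
    (hKI : (K ∩ I).card = k - 1) (hIJK : (I ∩ J ∩ K).card = k - 1) :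
    K ∩ I = I ∩ J ∩ K := by
  refine (Finset.eq_of_subset_of_card_le ?_ (by omega)).symm
  intro x hx
  simp only [Finset.mem_inter] at hx ⊢
  tauto

/-- Recovery: `(I∪J)∩(J∪K) = J`. -/
lemma white_recover (k : ℕ) (I J K : Finset (Fin n))
    (hKI : (K ∩ I).card = k - 1) (hIJK : (I ∩ J ∩ K).card = k - 1) :
    (I ∪ J) ∩ (J ∪ K) = J := by
  have hcore := white_core_eq k I J K hKI hIJK
  have hsub : K ∩ I ⊆ J := by
    rw [hcore]
    intro x hx
    simp only [Finset.mem_inter] at hx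
    exact hx.1.2
  ext x
  simp only [Finset.mem_inter, Finset.mem_union]
  constructor
  · rintro ⟨hxI | hxJ, hxJ2 | hxK⟩ <;>
      first
        | assumption
        | exact hsub (Finset.mem_inter.mpr ⟨hxK, hxI⟩)
  · exact fun h => ⟨Or.inr h, Or.inl h⟩

/-- The unions are pairwise distinct. -/
lemma white_union_ne (k : ℕ) (I J K : Finset (Fin n))
    (hI : I.card = k) (hJ : J.card = k)
    (hIJne : I ≠ J)
    (hIJ : (I ∩ J).card = k - 1) (hKI : (K ∩ I).card = k - 1)
    (hIJK : (I ∩ J ∩ K).card = k - 1) :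
    I ∪ J ≠ J ∪ K := by
  have hk : 1 ≤ k := by
    rcases Nat.eq_zero_or_pos k with h0 | h; swap; · exact h
    subst h0
    exact absurd (by rw [Finset.card_eq_zero.mp hI, Finset.card_eq_zero.mp hJ]) hIJne
  have hcKI := white_core_eq k I J K hKI hIJK
  have hcIJ : I ∩ J = I ∩ J ∩ K := by
    refine (Finset.eq_of_subset_of_card_le ?_ (by omega)).symm
    intro x hx; simp only [Finset.mem_inter] at hx ⊢; tauto
  intro h
  have hsub : I ⊆ J ∪ K := h ▸ Finset.subset_union_left
  have hsub2 : I ⊆ I ∩ J ∩ K := by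
    intro x hx
    rcases Finset.mem_union.mp (hsub hx) with hxJ | hxK
    · exact hcIJ ▸ Finset.mem_inter.mpr ⟨hx, hxJ⟩
    · exact hcKI ▸ Finset.mem_inter.mpr ⟨hxK, hx⟩
  have := Finset.card_le_card hsub2
  omega

/-- The original triple equals the set of pairwise intersections of distinct members
of the image triple. -/
lemma white_triple_repr (I J K : Finset (Fin n))
    (hAB : I ∪ J ≠ J ∪ K) (hBC : J ∪ K ≠ K ∪ I) (hCA : K ∪ I ≠ I ∪ J)
    (rJ : (I ∪ J) ∩ (J ∪ K) = J) (rK : (J ∪ K) ∩ (K ∪ I) = K)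
    (rI : (K ∪ I) ∩ (I ∪ J) = I) :
    ({I, J, K} : Set (Finset (Fin n)))
      = {Z | ∃ X ∈ ({I ∪ J, J ∪ K, K ∪ I} : Set (Finset (Fin n))),
          ∃ Y ∈ ({I ∪ J, J ∪ K, K ∪ I} : Set (Finset (Fin n))), X ≠ Y ∧ Z = X ∩ Y} := by
  ext Z
  simp only [Set.mem_insert_iff, Set.mem_singleton_iff, Set.mem_setOf_eq]
  constructor
  · rintro (h | h | h)
    · exact ⟨K ∪ I, Or.inr (Or.inr rfl), I ∪ J, Or.inl rfl, hCA, h.trans rI.symm⟩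
    · exact ⟨I ∪ J, Or.inl rfl, J ∪ K, Or.inr (Or.inl rfl), hAB, h.trans rJ.symm⟩
    · exact ⟨J ∪ K, Or.inr (Or.inl rfl), K ∪ I, Or.inr (Or.inr rfl), hBC, h.trans rK.symm⟩
  · rintro ⟨X, (rfl | rfl | rfl), Y, (rfl | rfl | rfl), hne, rfl⟩
    · exact absurd rfl hne
    · exact Or.inr (Or.inl rJ)
    · exact Or.inl (by rw [Finset.inter_comm]; exact rI)
    · exact Or.inr (Or.inl (by rw [Finset.inter_comm]; exact rJ))
    · exact absurd rfl hne
    · exact Or.inr (Or.inr rK)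
    · exact Or.inl rI
    · exact Or.inr (Or.inr (by rw [Finset.inter_comm]; exact rK))
    · exact absurd rfl hne

end aux

/-- The aging function is injective on white label-triples (as unordered triples), and the
inverse aging function applied to the image of a white triple recovers the original
triple: `(I∪J)∩(J∪K) = J`, `(J∪K)∩(K∪I) = K`, `(K∪I)∩(I∪J) = I`. -/
theorem aging_injective_on_white (n k : ℕ) (I J K I' J' K' : Finset (Fin n))
    (hI : I.card = k) (hJ : J.card = k) (hK : K.card = k)
    (hI' : I'.card = k) (hJ' : J'.card = k) (hK' : K'.card = k)
    (hIJne : I ≠ J) (hJKne : J ≠ K) (hIKne : I ≠ K)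
    (hIJne' : I' ≠ J') (hJKne' : J' ≠ K') (hIKne' : I' ≠ K')
    (hIJ : (I ∩ J).card = k - 1) (hJK : (J ∩ K).card = k - 1)
    (hKI : (K ∩ I).card = k - 1) (hIJK : (I ∩ J ∩ K).card = k - 1)
    (hIJ' : (I' ∩ J').card = k - 1) (hJK' : (J' ∩ K').card = k - 1)
    (hKI' : (K' ∩ I').card = k - 1) (hIJK' : (I' ∩ J' ∩ K').card = k - 1)
    (himg : ({I ∪ J, J ∪ K, K ∪ I} : Set (Finset (Fin n)))
        = ({I' ∪ J', J' ∪ K', K' ∪ I'} : Set (Finset (Fin n)))) :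
    ({I, J, K} : Set (Finset (Fin n))) = ({I', J', K'} : Set (Finset (Fin n))) ∧
    (I ∪ J) ∩ (J ∪ K) = J ∧ (J ∪ K) ∩ (K ∪ I) = K ∧ (K ∪ I) ∩ (I ∪ J) = I := by
  -- rotated triple-intersection cards
  have hJKI : (J ∩ K ∩ I).card = k - 1 := by
    rw [show J ∩ K ∩ I = I ∩ J ∩ K from by ext x; simp only [Finset.mem_inter]; tauto]
    exact hIJK
  have hKIJ : (K ∩ I ∩ J).card = k - 1 := by
    rw [show K ∩ I ∩ J = I ∩ J ∩ K from by ext x; simp only [Finset.mem_inter]; tauto]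
    exact hIJK
  have hJKI' : (J' ∩ K' ∩ I').card = k - 1 := by
    rw [show J' ∩ K' ∩ I' = I' ∩ J' ∩ K' from by ext x; simp only [Finset.mem_inter]; tauto]
    exact hIJK'
  have hKIJ' : (K' ∩ I' ∩ J').card = k - 1 := by
    rw [show K' ∩ I' ∩ J' = I' ∩ J' ∩ K' from by ext x; simp only [Finset.mem_inter]; tauto]
    exact hIJK'
  -- recovery identities
  have rJ := white_recover k I J K hKI hIJK
  have rK := white_recover k J K I hIJ hJKI
  have rI := white_recover k K I J hJK hKIJ
  have rJ' := white_recover k I' J' K' hKI' hIJK'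
  have rK' := white_recover k J' K' I' hIJ' hJKI'
  have rI' := white_recover k K' I' J' hJK' hKIJ'
  -- distinctness of unions
  have hAB := white_union_ne k I J K hI hJ hIJne hIJ hKI hIJK
  have hBC := white_union_ne k J K I hJ hK hJKne hJK hIJ hJKI
  have hCA := white_union_ne k K I J hK hI (Ne.symm hIKne) hKI hJK hKIJ
  have hAB' := white_union_ne k I' J' K' hI' hJ' hIJne' hIJ' hKI' hIJK'
  have hBC' := white_union_ne k J' K' I' hJ' hK' hJKne' hJK' hIJ' hJKI'
  have hCA' := white_union_ne k K' I' J' hK' hI' (Ne.symm hIKne') hKI' hJK' hKIJ'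
  refine ⟨?_, rJ, rK, rI⟩
  rw [white_triple_repr I J K hAB hBC hCA rJ rK rI,
      white_triple_repr I' J' K' hAB' hBC' hCA' rJ' rK' rI', himg]
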